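/- (n(n-2)/√π)·∫₀^{∞} e^{-3x²}·erf(x)^{n-3} dx with n = 4 evaluates to 4√3/9, i.e. (8/√π)·∫₀^{∞} e^{-3x²}·erf(x) dx = 4√3/9. -/

import Mathlib

open Real MeasureTheory Set Filter

/-- The error function. -/
noncomputable def erf (x : ℝ) : ℝ :=
  2 / Real.sqrt π * ∫ t in (0:ℝ)..x, Real.exp (-t^2)

lemma inner_gauss {c : ℝ} (hc : 0 < c) :
    ∫ x in Set.Ioi (0:ℝ), x * Real.exp (-c * x^2) = (2*c)⁻¹ := by
  have h := MeasureTheory.integral_Ioi_of_hasDerivAt_of_tendsto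
    (f := fun x => -(2*c)⁻¹ * Real.exp (-c * x^2))
    (f' := fun x => x * Real.exp (-c * x^2)) (a := 0) (m := 0) ?_ ?_ ?_ ?_
  · rw [h]; simp
  · exact Continuous.continuousWithinAt (by continuity)
  · intro x hx
    have h1 : HasDerivAt (fun x : ℝ => -c * x^2) (-c * (2*x)) x := by
      simpa using (hasDerivAt_pow 2 x).const_mul (-c)
    have h2 := h1.exp.const_mul (-(2*c)⁻¹)
    convert h2 using 1 <;> try rfl
    field_simp
  · exact (integrable_mul_exp_neg_mul_sq hc).integrableOn
  · have h0 : Tendsto (fun x : ℝ => c * x^2) atTop atTop :=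
      (tendsto_pow_atTop (two_ne_zero)).const_mul_atTop hc
    have h3 : Tendsto (fun x : ℝ => -c * x^2) atTop atBot := by
      simpa [neg_mul, Function.comp_def] using tendsto_neg_atTop_atBot.comp h0
    have h4 : Tendsto (fun x : ℝ => Real.exp (-c * x^2)) atTop (nhds 0) :=
      Real.tendsto_exp_atBot.comp h3
    simpa using h4.const_mul (-(2*c)⁻¹)

lemma arctan_int : ∫ s in (0:ℝ)..1, (3+s^2)⁻¹ = π / (6 * Real.sqrt 3) := by
  have h3 : (0:ℝ) < Real.sqrt 3 := Real.sqrt_pos.mpr (by norm_num)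
  have hsq : (Real.sqrt 3)^2 = 3 := Real.sq_sqrt (by norm_num)
  have key : ∀ s : ℝ, HasDerivAt (fun s : ℝ => (Real.sqrt 3)⁻¹ * Real.arctan (s / Real.sqrt 3))
      ((3+s^2)⁻¹) s := by
    intro s
    have h1 : HasDerivAt (fun s : ℝ => s / Real.sqrt 3) ((Real.sqrt 3)⁻¹) s := by
      simpa using (hasDerivAt_id s).div_const (Real.sqrt 3)
    have h2 := ((Real.hasDerivAt_arctan (s / Real.sqrt 3)).comp s h1).const_mul
      ((Real.sqrt 3)⁻¹)
    convert h2 using 1 <;> try rfl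
    have h5 : (0:ℝ) < 3 + s^2 := by positivity
    field_simp
    rw [hsq]
  have hcont : Continuous (fun s : ℝ => (3+s^2)⁻¹) := by
    apply Continuous.inv₀ (by continuity)
    intro s; positivity
  rw [intervalIntegral.integral_eq_sub_of_hasDerivAt (fun s _ => key s)
    (hcont.intervalIntegrable 0 1)]
  have harc : Real.arctan (1 / Real.sqrt 3) = π / 6 :=
    Real.arctan_eq_of_tan_eq Real.tan_pi_div_six
      ⟨by linarith [Real.pi_pos], by linarith [Real.pi_pos]⟩
  simp only [one_div] at harc
  simp only [zero_div, Real.arctan_zero, mul_zero, sub_zero, one_div, harc]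
  rw [eq_div_iff (by positivity : (6:ℝ) * Real.sqrt 3 ≠ 0)]
  field_simp

theorem stmt_15 :
    8 / Real.sqrt π * (∫ x in Set.Ioi (0:ℝ), Real.exp (-3 * x^2) * erf x)
      = 4 * Real.sqrt 3 / 9 := by
  have hπ : (0:ℝ) < Real.sqrt π := Real.sqrt_pos.mpr Real.pi_pos
  have hπsq : Real.sqrt π * Real.sqrt π = π := Real.mul_self_sqrt Real.pi_pos.le
  have h3 : (0:ℝ) < Real.sqrt 3 := Real.sqrt_pos.mpr (by norm_num)
  have h3sq : Real.sqrt 3 * Real.sqrt 3 = 3 := Real.mul_self_sqrt (by norm_num)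
  -- Step 1: rewrite integrand for x > 0
  have step1 : ∀ x ∈ Set.Ioi (0:ℝ), Real.exp (-3 * x^2) * erf x
      = ∫ s in Set.Ioc (0:ℝ) 1, 2 / Real.sqrt π * x * Real.exp (-(3+s^2) * x^2) := by
    intro x hx
    have hx0 : (0:ℝ) < x := hx
    have hsub : ∫ s in (0:ℝ)..1, Real.exp (-(x*s)^2)
        = x⁻¹ * ∫ t in (0:ℝ)..x, Real.exp (-t^2) := by
      have := intervalIntegral.integral_comp_mul_left (c := x)
        (f := fun t => Real.exp (-t^2)) (a := 0) (b := 1) hx0.ne'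
      simpa [smul_eq_mul] using this
    have h1 : ∫ t in (0:ℝ)..x, Real.exp (-t^2)
        = x * ∫ s in (0:ℝ)..1, Real.exp (-(x*s)^2) := by
      rw [hsub]; field_simp
    have key : Real.exp (-3 * x^2) * erf x
        = ∫ s in (0:ℝ)..1, 2 / Real.sqrt π * x * Real.exp (-(3+s^2) * x^2) := by
      rw [erf, h1]
      rw [show Real.exp (-3 * x^2) * (2 / Real.sqrt π *
            (x * ∫ s in (0:ℝ)..1, Real.exp (-(x*s)^2)))
          = (2 / Real.sqrt π * x * Real.exp (-3 * x^2)) *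
            ∫ s in (0:ℝ)..1, Real.exp (-(x*s)^2) by ring]
      rw [← intervalIntegral.integral_const_mul]
      apply intervalIntegral.integral_congr
      intro s _
      simp only
      rw [mul_assoc, ← Real.exp_add]
      ring_nf
    rw [key, intervalIntegral.integral_of_le zero_le_one]
  rw [MeasureTheory.setIntegral_congr_fun measurableSet_Ioi step1]
  -- Step 2: Fubini
  have hcont : Continuous (Function.uncurry fun (x s : ℝ) =>
      2 / Real.sqrt π * x * Real.exp (-(3+s^2) * x^2)) := by
    apply Continuous.mul
    · exact continuous_const.mul continuous_fst
    · exact Real.continuous_exp.comp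
        (((continuous_const.add (continuous_snd.pow 2)).neg).mul (continuous_fst.pow 2))
  have hF : Integrable (Function.uncurry fun (x s : ℝ) =>
      2 / Real.sqrt π * x * Real.exp (-(3+s^2) * x^2))
      ((volume.restrict (Set.Ioi (0:ℝ))).prod (volume.restrict (Set.Ioc (0:ℝ) 1))) := by
    have hg : Integrable (fun x : ℝ => 2 / Real.sqrt π * (|x| * Real.exp (-3 * x^2)))
        (volume.restrict (Set.Ioi (0:ℝ))) := by
      refine (Integrable.const_mul ?_ _).restrict
      refine (integrable_mul_exp_neg_mul_sq (by norm_num : (0:ℝ) < 3)).abs.congr ?_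
      filter_upwards with x
      rw [abs_mul, abs_of_pos (Real.exp_pos _)]
    have hone : Integrable (fun _ : ℝ => (1:ℝ)) (volume.restrict (Set.Ioc (0:ℝ) 1)) :=
      integrableOn_const measure_Ioc_lt_top.ne
    have hG := hg.mul_prod hone
    refine hG.mono' hcont.aestronglyMeasurable ?_
    filter_upwards with z
    simp only [Function.uncurry, Real.norm_eq_abs, mul_one]
    have h2π : (0:ℝ) < 2 / Real.sqrt π := by positivity
    rw [abs_mul, abs_mul, abs_of_pos (Real.exp_pos _), abs_of_pos h2π, mul_assoc]
    refine mul_le_mul_of_nonneg_left ?_ (by positivity)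
    refine mul_le_mul_of_nonneg_left ?_ (abs_nonneg _)
    have hexp : -(3 + z.2^2) * z.1^2 ≤ -3 * z.1^2 := by
      have := mul_nonneg (sq_nonneg z.2) (sq_nonneg z.1)
      nlinarith
    exact Real.exp_le_exp.mpr hexp
  rw [MeasureTheory.integral_integral_swap hF]
  -- Step 3: inner integral
  have step3 : ∀ s ∈ Set.Ioc (0:ℝ) 1,
      (∫ x in Set.Ioi (0:ℝ), 2 / Real.sqrt π * x * Real.exp (-(3+s^2) * x^2))
      = 2 / Real.sqrt π * (2*(3+s^2))⁻¹ := by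
    intro s _
    have hc : (0:ℝ) < 3 + s^2 := by positivity
    rw [show (fun x => 2 / Real.sqrt π * x * Real.exp (-(3+s^2) * x^2))
        = (fun x => 2 / Real.sqrt π * (x * Real.exp (-(3+s^2) * x^2))) by
      ext x; ring]
    rw [MeasureTheory.integral_const_mul, inner_gauss hc]
  rw [MeasureTheory.setIntegral_congr_fun measurableSet_Ioc step3]
  -- Step 4: evaluate outer integral
  rw [← intervalIntegral.integral_of_le zero_le_one]
  have h4 : ∫ s in (0:ℝ)..1, 2 / Real.sqrt π * (2*(3+s^2))⁻¹
      = 1 / Real.sqrt π * ∫ s in (0:ℝ)..1, (3+s^2)⁻¹ := by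
    rw [← intervalIntegral.integral_const_mul]
    apply intervalIntegral.integral_congr
    intro s _
    simp only
    have hc : (0:ℝ) < 3 + s^2 := by positivity
    field_simp
  rw [h4, arctan_int]
  field_simp
  nlinarith [Real.pi_pos, hπsq, h3sq, mul_pos hπ h3, mul_pos Real.pi_pos h3]
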